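/- For every integer L ≥ 2 and every ε with 0 < ε < 1, the μ-measure of the set of configurations φ for which every one of the 2L² bonds is ε-ordered is at most ε^{L² − 1}. -/

import Mathlib

open MeasureTheory Real

/-- The site space: the discrete torus of side `L`. -/
abbrev Torus (L : ℕ) := ZMod L × ZMod L

/-- A configuration of the toy model: one circle-valued spin per site. -/
abbrev Config (L : ℕ) := Torus L → AddCircle (1 : ℝ)

/-- The two unit coordinate vectors `e₁ = (1,0)` and `e₂ = (0,1)`. -/
def coordVec (L : ℕ) : Fin 2 → Torus L
  | 0 => (1, 0)
  | 1 => (0, 1)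

/-- The product of normalized Haar measures on the spins. -/
noncomputable def toyMeasure (L : ℕ) [NeZero L] : Measure (Config L) :=
  Measure.pi fun _ => (AddCircle.haarAddCircle : Measure (AddCircle (1 : ℝ)))

/-- A bond `(x, x + eᵢ)` of the configuration `φ` is `ε`-ordered when
`‖φ x - φ (x + eᵢ)‖ ≤ ε/2`, where `‖·‖` is the quotient norm on `ℝ/ℤ`. -/
def IsOrderedBond (L : ℕ) [NeZero L] (ε : ℝ) (φ : Config L) (x : Torus L) (i : Fin 2) : Prop :=
  ‖φ x - φ (x + coordVec L i)‖ ≤ ε / 2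

noncomputable instance (L : ℕ) [NeZero L] (ε : ℝ) (φ : Config L) (x : Torus L) (i : Fin 2) :
    Decidable (IsOrderedBond L ε φ x i) :=
  Real.decidableLE _ _

/-- The toy Hamiltonian: minus the number of `ε`-ordered bonds. -/
noncomputable def toyH (L : ℕ) [NeZero L] (ε : ℝ) (φ : Config L) : ℝ :=
  -(∑ x : Torus L, ∑ i : Fin 2, if IsOrderedBond L ε φ x i then (1 : ℝ) else 0)

/-- The toy-model partition function. -/
noncomputable def toyZ (L : ℕ) [NeZero L] (β ε : ℝ) : ℝ :=
  ∫ φ, Real.exp (-β * toyH L ε φ) ∂(toyMeasure L)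


namespace ToyAux

local notation "G" => AddCircle (1 : ℝ)


/-- partial sums map on `Fin (n+1) → G`. -/
noncomputable def pSum (n : ℕ) (ψ : Fin (n+1) → G) : Fin (n+1) → G :=
  fun j => ∑ i ∈ Finset.range (j.val + 1), (fun k : ℕ => if h : k < n+1 then ψ ⟨k, h⟩ else 0) i

noncomputable def pDiff (n : ℕ) (ψ : Fin (n+1) → G) : Fin (n+1) → G :=
  fun j => ψ j - (if h : j.val = 0 then 0 else ψ ⟨j.val - 1, by omega⟩)

lemma pDiff_pSum (n : ℕ) (ψ : Fin (n+1) → G) : pDiff n (pSum n ψ) = ψ := by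
  funext j
  unfold pDiff pSum
  rcases Nat.eq_zero_or_pos j.val with h | h
  · simp [h]
    congr 1
    exact (Fin.ext h.symm : (0:Fin (n+1)) = j)
  · rw [dif_neg (by omega)]
    obtain ⟨m, hm⟩ : ∃ m, j.val = m + 1 := ⟨j.val - 1, by omega⟩
    simp only [hm, Nat.add_sub_cancel]
    rw [Finset.sum_range_succ]
    simp only [dif_pos (hm ▸ j.isLt)]
    rw [sub_eq_iff_eq_add]
    have : (⟨m+1, hm ▸ j.isLt⟩ : Fin (n+1)) = j := Fin.ext hm.symm
    rw [this]
    abel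

lemma pSum_pDiff (n : ℕ) (ψ : Fin (n+1) → G) : pSum n (pDiff n ψ) = ψ := by
  funext j
  unfold pSum pDiff
  obtain ⟨v, hv⟩ : ∃ v : ℕ, v = j.val := ⟨j.val, rfl⟩
  have hvlt : v < n + 1 := hv ▸ j.isLt
  have : ∀ v (hvlt : v < n+1), ∑ i ∈ Finset.range (v + 1),
      (fun k : ℕ => if h : k < n+1 then
        ψ ⟨k, h⟩ - (if h0 : (⟨k, h⟩ : Fin (n+1)).val = 0 then 0 else ψ ⟨k - 1, by omega⟩) else 0) i
      = ψ ⟨v, hvlt⟩ := by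
    intro v
    induction v with
    | zero => intro h; simp
    | succ m ih =>
      intro h
      rw [Finset.sum_range_succ, ih (by omega)]
      simp [h]
  have h2 := this v hvlt
  subst hv
  rw [h2]

/-- `pSum` as an additive equivalence. -/
noncomputable def pSumEquiv (n : ℕ) : (Fin (n+1) → G) ≃+ (Fin (n+1) → G) where
  toFun := pSum n
  invFun := pDiff n
  left_inv := pDiff_pSum n
  right_inv := pSum_pDiff n
  map_add' ψ χ := by
    funext j
    show pSum n (ψ + χ) j = pSum n ψ j + pSum n χ j
    unfold pSum
    rw [← Finset.sum_add_distrib]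
    refine Finset.sum_congr rfl fun i _ => ?_
    by_cases h : i < n + 1 <;> simp [h]

lemma continuous_pSum (n : ℕ) : Continuous (pSum n) := by
  refine continuous_pi fun j => ?_
  unfold pSum
  refine continuous_finset_sum _ fun i _ => ?_
  by_cases h : i < n + 1 <;> simp only [h, dif_pos, dif_neg]
  · exact continuous_apply _
  · exact continuous_const

lemma continuous_pDiff (n : ℕ) : Continuous (pDiff n) := by
  refine continuous_pi fun j => ?_
  unfold pDiff
  by_cases h : j.val = 0 <;> simp only [h, dif_pos, dif_neg, not_false_iff]
  · simpa using (continuous_apply j)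
  · exact (continuous_apply j).sub (continuous_apply _)

noncomputable def μpi (n : ℕ) : Measure (Fin (n+1) → G) :=
  Measure.pi fun _ => (AddCircle.haarAddCircle : Measure G)

lemma map_pSum (n : ℕ) : (μpi n).map (pSum n) = μpi n := by
  have h1 : IsProbabilityMeasure (μpi n) := by unfold μpi; infer_instance
  have h2 : Measure.IsAddHaarMeasure (μpi n) := by unfold μpi; infer_instance
  have h3 : Measure.IsAddHaarMeasure ((μpi n).map (pSumEquiv n)) :=
    (pSumEquiv n).isAddHaarMeasure_map (μpi n) (continuous_pSum n) (continuous_pDiff n)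
  have h4 : IsProbabilityMeasure ((μpi n).map (pSumEquiv n)) :=
    Measure.isProbabilityMeasure_map (continuous_pSum n).measurable.aemeasurable
  have : (μpi n).map (pSumEquiv n) = μpi n :=
    Measure.isAddHaarMeasure_eq_of_isProbabilityMeasure _ _
  exact this

lemma haar_ball {ε : ℝ} (hε : 0 ≤ ε) (hε' : ε < 1) :
    (AddCircle.haarAddCircle : Measure G) (Metric.closedBall (0:G) (ε/2)) = ENNReal.ofReal ε := by
  have h := AddCircle.volume_closedBall (T := 1) (x := (0 : G)) (ε/2)
  rw [AddCircle.volume_eq_smul_haarAddCircle] at h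
  simp only [ENNReal.ofReal_one, one_smul] at h
  rw [h]
  congr 1
  rw [min_eq_right (by linarith)]
  ring

set_option maxHeartbeats 1000000 in
lemma key (n : ℕ) {ε : ℝ} (hε : 0 < ε) (hε' : ε < 1) :
    μpi n {ψ : Fin (n+1) → G |
      ∀ (m : ℕ) (h : m + 1 < n + 1), ‖ψ ⟨m, by omega⟩ - ψ ⟨m+1, h⟩‖ ≤ ε/2} ≤
    ENNReal.ofReal (ε ^ n) := by
  set E : Set (Fin (n+1) → G) := {ψ : Fin (n+1) → G |
      ∀ (m : ℕ) (h : m + 1 < n + 1), ‖ψ ⟨m, by omega⟩ - ψ ⟨m+1, h⟩‖ ≤ ε/2} with hE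
  have hEmeas : MeasurableSet E := by
    have : E = ⋂ (m : ℕ) (h : m + 1 < n + 1),
        {ψ : Fin (n+1) → G | ‖ψ ⟨m, by omega⟩ - ψ ⟨m+1, h⟩‖ ≤ ε/2} := by
      ext ψ; simp only [hE, Set.mem_iInter, Set.mem_setOf_eq]
    rw [this]
    refine MeasurableSet.iInter fun m => MeasurableSet.iInter fun h => ?_
    exact (IsClosed.preimage (((continuous_apply (⟨m, by omega⟩ : Fin (n+1))).sub
      (continuous_apply (⟨m+1, h⟩ : Fin (n+1)))).norm) isClosed_Iic).measurableSet
  -- transfer through pSum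
  have h1 : μpi n E = μpi n (pSum n ⁻¹' E) := by
    conv_lhs => rw [← map_pSum n]
    rw [Measure.map_apply (continuous_pSum n).measurable hEmeas]
  rw [h1]
  -- the preimage is contained in a box
  have h2 : pSum n ⁻¹' E ⊆ Set.pi Set.univ
      (fun j : Fin (n+1) => if j.val = 0 then Set.univ else Metric.closedBall (0:G) (ε/2)) := by
    intro χ hχ j _
    by_cases hj : j.val = 0
    · simp [hj]
    · simp only [hj, if_neg, if_false]
      obtain ⟨m, hm⟩ : ∃ m, j.val = m + 1 := ⟨j.val - 1, by omega⟩
      have := hχ m (hm ▸ j.isLt)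
      -- pSum χ ⟨m+1⟩ - pSum χ ⟨m⟩ = χ ⟨m+1⟩
      have hsum : pSum n χ ⟨m+1, hm ▸ j.isLt⟩ - pSum n χ ⟨m, by omega⟩ = χ ⟨m+1, hm ▸ j.isLt⟩ := by
        unfold pSum
        simp only
        rw [Finset.sum_range_succ]
        simp [hm ▸ j.isLt]
      rw [Metric.mem_closedBall, dist_zero_right]
      have hj' : j = ⟨m+1, hm ▸ j.isLt⟩ := Fin.ext hm
      rw [hj', ← hsum, norm_sub_rev]
      exact this
  calc μpi n (pSum n ⁻¹' E) ≤ μpi n (Set.pi Set.univ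
      (fun j : Fin (n+1) => if j.val = 0 then Set.univ else Metric.closedBall (0:G) (ε/2))) :=
        measure_mono h2
    _ = ∏ j : Fin (n+1), (AddCircle.haarAddCircle : Measure G)
        (if j.val = 0 then Set.univ else Metric.closedBall (0:G) (ε/2)) := Measure.pi_pi _ _
    _ = ENNReal.ofReal (ε ^ n) := by
        rw [Fin.prod_univ_succ]
        simp only [Fin.val_zero, if_pos, Fin.val_succ, Nat.succ_ne_zero, if_neg]
        rw [measure_univ, one_mul]
        simp only [Finset.prod_const, Finset.card_univ, Fintype.card_fin]
        rw [if_neg (by simp), haar_ball hε.le hε', ← ENNReal.ofReal_pow hε.le]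



/-- boustrophedon enumeration of the torus. -/
def bous (L : ℕ) (m : ℕ) : Torus L :=
  (((m / L : ℕ) : ZMod L),
    if (m / L) % 2 = 0 then ((m % L : ℕ) : ZMod L) else ((L - 1 - m % L : ℕ) : ZMod L))

lemma bous_injOn (L : ℕ) (hL : 2 ≤ L) {a b : ℕ} (ha : a < L^2) (hb : b < L^2)
    (hab : bous L a = bous L b) : a = b := by
  haveI : NeZero L := ⟨by omega⟩
  have hL0 : 0 < L := by omega
  have h1 : a / L < L := Nat.div_lt_of_lt_mul (by rw [← pow_two]; exact ha)
  have h2 : b / L < L := Nat.div_lt_of_lt_mul (by rw [← pow_two]; exact hb)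
  have h3 : a % L < L := Nat.mod_lt _ hL0
  have h4 : b % L < L := Nat.mod_lt _ hL0
  obtain ⟨hfst, hsnd⟩ := Prod.mk.injEq .. ▸ hab
  have hdiv : a / L = b / L := by
    have := congrArg ZMod.val hfst
    rwa [ZMod.val_cast_of_lt h1, ZMod.val_cast_of_lt h2] at this
  rw [hdiv] at hsnd
  have hmod : a % L = b % L := by
    by_cases hp : (b / L) % 2 = 0
    · rw [if_pos hp, if_pos hp] at hsnd
      have := congrArg ZMod.val hsnd
      rwa [ZMod.val_cast_of_lt h3, ZMod.val_cast_of_lt h4] at this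
    · rw [if_neg hp, if_neg hp] at hsnd
      have := congrArg ZMod.val hsnd
      rw [ZMod.val_cast_of_lt (by omega), ZMod.val_cast_of_lt (by omega)] at this
      omega
  have ea := Nat.div_add_mod a L
  have eb := Nat.div_add_mod b L
  rw [hdiv] at ea
  omega

/-- The boustrophedon path as an equivalence. -/
noncomputable def bousEquiv (L : ℕ) (hL : 2 ≤ L) : Fin (L^2) ≃ Torus L := by
  haveI : NeZero L := ⟨(Nat.lt_of_lt_of_le Nat.two_pos hL).ne'⟩
  refine Equiv.ofBijective (fun m : Fin (L^2) => bous L m.val) ?_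
  rw [Fintype.bijective_iff_injective_and_card]
  constructor
  · intro a b hab
    exact Fin.ext (bous_injOn L hL a.isLt b.isLt hab)
  · simp [ZMod.card, pow_two]

lemma bous_adj (L : ℕ) (hL : 2 ≤ L) (m : ℕ) (h : m + 1 < L^2) :
    (∃ i, bous L (m+1) = bous L m + coordVec L i) ∨
    (∃ i, bous L m = bous L (m+1) + coordVec L i) := by
  have hL0 : 0 < L := by omega
  set r := m / L with hr
  set c := m % L with hc
  have hcL : c < L := Nat.mod_lt _ hL0
  have hmrc : m = L * r + c := (Nat.div_add_mod m L).symm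
  by_cases hcase : c + 1 < L
  · -- same row
    have hq : (m+1) / L = r := by
      rw [show m + 1 = L * r + (c+1) by omega, Nat.mul_add_div hL0, Nat.div_eq_of_lt hcase,
        add_zero]
    have hm' : (m+1) % L = c + 1 := by
      rw [show m + 1 = L * r + (c+1) by omega, Nat.mul_add_mod, Nat.mod_eq_of_lt hcase]
    by_cases hp : r % 2 = 0
    · left; exact ⟨1, by
        simp only [bous, hq, hm', ← hr, ← hc, if_pos hp, coordVec, Prod.mk_add_mk]
        rw [Prod.mk.injEq]
        constructor
        · rw [add_zero]
        · push_cast; ring⟩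
    · right; exact ⟨1, by
        simp only [bous, hq, hm', ← hr, ← hc, if_neg hp, coordVec, Prod.mk_add_mk]
        rw [Prod.mk.injEq]
        constructor
        · rw [add_zero]
        · have : L - 1 - c = (L - 1 - (c+1)) + 1 := by omega
          rw [this]; push_cast; ring⟩
  · -- new row
    have hcL1 : c = L - 1 := by omega
    have hm1 : m + 1 = L * (r + 1) := by
      have : m + 1 = L * r + L := by omega
      rw [this]; ring
    have hq : (m+1) / L = r + 1 := by rw [hm1, Nat.mul_div_cancel_left _ hL0]
    have hm' : (m+1) % L = 0 := by rw [hm1, Nat.mul_mod_right]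
    left
    refine ⟨0, ?_⟩
    simp only [bous, hq, hm', ← hr, ← hc, coordVec, Prod.mk_add_mk]
    rw [Prod.mk.injEq]
    constructor
    · push_cast; ring
    · by_cases hp : r % 2 = 0
      · rw [if_pos hp, if_neg (by omega), hcL1]
        simp
      · rw [if_neg hp, if_pos (by omega), hcL1]
        simp [Nat.sub_self]

end ToyAux

/-- the set of fully `ε`-ordered configurations has measure
at most `ε^{L² − 1}`. -/
theorem toy_ordered_measure_upper_bound (L : ℕ) (hL : 2 ≤ L) (ε : ℝ)
    (hε : 0 < ε) (hε' : ε < 1) :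
    haveI : NeZero L := ⟨by omega⟩
    toyMeasure L {φ : Config L | ∀ x : Torus L, ∀ i : Fin 2, IsOrderedBond L ε φ x i} ≤
      ENNReal.ofReal (ε ^ (L ^ 2 - 1)) := by
  haveI : NeZero L := ⟨by omega⟩
  have hn : (L^2 - 1) + 1 = L^2 := by
    have : 2^2 ≤ L^2 := Nat.pow_le_pow_left hL 2
    omega
  set n := L^2 - 1 with hndef
  set e : Fin (n+1) ≃ Torus L := (finCongr hn).trans (ToyAux.bousEquiv L hL) with hedef
  have he : ∀ (m : ℕ) (hm : m < n+1), e ⟨m, hm⟩ = ToyAux.bous L m := fun m hm => rfl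
  set B := {φ : Config L | ∀ (m : ℕ) (h : m + 1 < n + 1),
    ‖φ (ToyAux.bous L m) - φ (ToyAux.bous L (m+1))‖ ≤ ε/2} with hBdef
  have hAB : {φ : Config L | ∀ x : Torus L, ∀ i : Fin 2, IsOrderedBond L ε φ x i} ⊆ B := by
    intro φ hφ m hm
    have hm' : m + 1 < L^2 := hn ▸ hm
    rcases ToyAux.bous_adj L hL m hm' with ⟨i, hi⟩ | ⟨i, hi⟩
    · have hb := hφ (ToyAux.bous L m) i
      rw [IsOrderedBond] at hb
      rw [hi]
      exact hb
    · have hb := hφ (ToyAux.bous L (m+1)) i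
      rw [IsOrderedBond] at hb
      rw [norm_sub_rev, hi]
      exact hb
  refine le_trans (measure_mono hAB) ?_
  have hmp := MeasureTheory.measurePreserving_piCongrLeft
    (fun _ : Torus L => (AddCircle.haarAddCircle : Measure (AddCircle (1:ℝ)))) e
  have hpre : (MeasurableEquiv.piCongrLeft (fun _ : Torus L => AddCircle (1:ℝ)) e) ⁻¹' B =
      {ψ : Fin (n+1) → AddCircle (1:ℝ) |
        ∀ (m : ℕ) (h : m + 1 < n + 1), ‖ψ ⟨m, by omega⟩ - ψ ⟨m+1, h⟩‖ ≤ ε/2} := by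
    ext ψ
    simp only [Set.mem_preimage, hBdef, Set.mem_setOf_eq]
    have hval : ∀ (m : ℕ) (hm : m < n+1),
        (MeasurableEquiv.piCongrLeft (fun _ : Torus L => AddCircle (1:ℝ)) e) ψ
          (ToyAux.bous L m) = ψ ⟨m, hm⟩ := by
      intro m hm
      rw [← he m hm]
      exact MeasurableEquiv.piCongrLeft_apply_apply (β := fun _ : Torus L => AddCircle (1:ℝ)) e ψ ⟨m, hm⟩
    constructor
    · intro hψ m hmlt
      rw [← hval m (by omega), ← hval (m+1) hmlt]
      exact hψ m hmlt
    · intro hψ m hmlt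
      rw [hval m (by omega), hval (m+1) hmlt]
      exact hψ m hmlt
  have hB : toyMeasure L B = ToyAux.μpi n
      {ψ : Fin (n+1) → AddCircle (1:ℝ) |
        ∀ (m : ℕ) (h : m + 1 < n + 1), ‖ψ ⟨m, by omega⟩ - ψ ⟨m+1, h⟩‖ ≤ ε/2} := by
    rw [← hpre]
    exact (hmp.measure_preimage_equiv B).symm
  rw [hB]
  exact ToyAux.key n hε hε'
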